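/- Let S ⊆ ℤ be nonempty, contain nℤ for some n ≥ 1, and be closed under the operation (i, j) ∈ S×S ↦ 2j - i ∈ S. If additionally whenever i, j ∈ S and i + j is even then (i+j)/2 ∈ S, then S = tℤ where t is the least positive element of S, and t is odd. -/

import Mathlib

theorem stmt_16 (S : Set ℤ) (hne : S.Nonempty)
    (hsub : ∃ n : ℤ, 1 ≤ n ∧ ∀ m : ℤ, n * m ∈ S)
    (hrefl : ∀ i ∈ S, ∀ j ∈ S, 2*j - i ∈ S)
    (hmid : ∀ i ∈ S, ∀ j ∈ S, Even (i + j) → (i + j) / 2 ∈ S)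
    (t : ℤ) (ht : IsLeast {u : ℤ | u ∈ S ∧ 0 < u} t) :
    S = {x : ℤ | t ∣ x} ∧ Odd t := by
  obtain ⟨⟨htS, htpos⟩, hmin⟩ := ht
  obtain ⟨n, hn1, hnm⟩ := hsub
  have h0 : (0:ℤ) ∈ S := by simpa using hnm 0
  have hneg : ∀ i ∈ S, -i ∈ S := by
    intro i hi
    simpa using hrefl i hi 0 h0
  have hadd2t : ∀ x ∈ S, x + 2*t ∈ S := by
    intro x hx
    have := hrefl (-x) (hneg x hx) t htS
    have e : 2*t - -x = x + 2*t := by ring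
    rwa [e] at this
  have hsub2t : ∀ x ∈ S, x - 2*t ∈ S := by
    intro x hx
    have := hadd2t (-x) (hneg x hx)
    have := hneg _ this
    have e : -(-x + 2*t) = x - 2*t := by ring
    rwa [e] at this
  have hshift : ∀ m : ℤ, ∀ x ∈ S, x + m*(2*t) ∈ S := by
    intro m
    induction m using Int.induction_on with
    | zero => intro x hx; simpa using hx
    | succ k ih =>
        intro x hx
        have := hadd2t _ (ih x hx)
        have e : x + (k:ℤ)*(2*t) + 2*t = x + ((k:ℤ)+1)*(2*t) := by ring
        rwa [e] at this
    | pred k ih =>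
        intro x hx
        have := hsub2t _ (ih x hx)
        have e : x + (-(k:ℤ))*(2*t) - 2*t = x + (-(k:ℤ)-1)*(2*t) := by ring
        rwa [e] at this
  constructor
  · ext s
    simp only [Set.mem_setOf_eq]
    constructor
    · intro hs
      set q := s / (2*t) with hq
      set r := s % (2*t) with hr
      have h2t : 0 < 2*t := by linarith
      have hrS : r ∈ S := by
        have := hshift (-q) s hs
        have e : s + (-q)*(2*t) = r := by
          have := Int.mul_ediv_add_emod s (2*t)
          rw [hr, hq]; linarith
        rwa [e] at this
      have hr0 : 0 ≤ r := Int.emod_nonneg s (by linarith)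
      have hrlt : r < 2*t := Int.emod_lt_of_pos s h2t
      have hrt : r = 0 ∨ r = t := by
        rcases eq_or_lt_of_le hr0 with h | h
        · left; omega
        · right
          have h1 : t ≤ r := hmin ⟨hrS, h⟩
          have h2 : 2*t - r ∈ S := hrefl r hrS t htS
          rcases eq_or_lt_of_le h1 with h' | h'
          · omega
          · have : t ≤ 2*t - r := hmin ⟨h2, by omega⟩
            omega
      have : s = 2*t*q + r := (Int.mul_ediv_add_emod s (2*t)).symm
      rcases hrt with h | h
      · exact ⟨2*q, by rw [h] at this; rw [this]; ring⟩
      · exact ⟨2*q + 1, by rw [h] at this; rw [this]; ring⟩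
    · rintro ⟨c, rfl⟩
      rcases Int.even_or_odd c with ⟨m, hm⟩ | ⟨m, hm⟩
      · have := hshift m 0 h0
        have e : (0:ℤ) + m*(2*t) = t * c := by rw [hm]; ring
        rwa [e] at this
      · have := hshift m t htS
        have e : t + m*(2*t) = t * c := by rw [hm]; ring
        rwa [e] at this
  · by_contra hodd
    have hev : Even t := Int.not_odd_iff_even.mp hodd
    obtain ⟨u, hu⟩ := hev
    have := hmid t htS 0 h0 (by exact ⟨u, by omega⟩)
    have e : (t + 0)/2 = u := by omega
    rw [e] at this
    have : t ≤ u := hmin ⟨this, by omega⟩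
    omega
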